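/- Let $f_1,\dots,f_n : \mathbb{R}^d \to \mathbb{R}$ be $\mu$-strongly convex and $L$-smooth with minimizer $x_\ast$ of $f = \frac{1}{n}\sum_i f_i$, let $\sigma_\ast^2 = \frac{1}{n}\sum_{i=1}^n \|\nabla f_i(x_\ast)\|^2$, and let $\gamma > 0$. For a uniformly random permutation $\pi$ of $\{1,\dots,n\}$ define $x_\ast^i = x_\ast - \gamma\sum_{j=0}^{i-1}\nabla f_{\pi_j}(x_\ast)$ and $\sigma_{\mathrm{Shuffle}}^2 = \max_{1 \le i \le n-1}\frac{1}{\gamma}\mathbb{E}[D_{f_{\pi_i}}(x_\ast^i, x_\ast)]$. Then $\frac{\gamma\mu n}{8}\sigma_\ast^2 \le \sigma_{\mathrm{Shuffle}}^2 \le \frac{\gamma L n}{4}\sigma_\ast^2$. -/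

import Mathlib

open InnerProductSpace RealInnerProductSpace

variable {E : Type*} [NormedAddCommGroup E] [InnerProductSpace ℝ E] [CompleteSpace E]

/-- descent lemma -/
lemma descent_lemma (f : E → ℝ) (hd : Differentiable ℝ f) (L : ℝ)
    (hsm : ∀ x y, ‖gradient f x - gradient f y‖ ≤ L * ‖x - y‖) (x y : E) :
    f x - f y - ⟪gradient f y, x - y⟫_ℝ ≤ L / 2 * ‖x - y‖ ^ 2 := by
  set v := x - y with hv
  have hline : ∀ t : ℝ, HasDerivAt (fun t : ℝ => y + t • v) v t := by
    intro t
    simpa using ((hasDerivAt_id t).smul_const v).const_add y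
  have hφ : ∀ t : ℝ, HasDerivAt (fun t : ℝ => f (y + t • v))
      ⟪gradient f (y + t • v), v⟫_ℝ t := by
    intro t
    have h1 : HasFDerivAt f (toDual ℝ E (gradient f (y + t • v))) (y + t • v) :=
      hasGradientAt_iff_hasFDerivAt.mp (hd _).hasGradientAt
    simpa [toDual_apply_apply, Function.comp_def] using h1.comp_hasDerivAt t (hline t)
  set ψ : ℝ → ℝ := fun t => f (y + t • v) - t * ⟪gradient f y, v⟫_ℝ
      - L * ‖v‖ ^ 2 * t ^ 2 / 2 with hψ
  have hψd : ∀ t : ℝ, HasDerivAt ψ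
      (⟪gradient f (y + t • v), v⟫_ℝ - ⟪gradient f y, v⟫_ℝ - L * ‖v‖ ^ 2 * t) t := by
    intro t
    have h2 : HasDerivAt (fun t : ℝ => t * ⟪gradient f y, v⟫_ℝ) ⟪gradient f y, v⟫_ℝ t := by
      simpa using (hasDerivAt_id t).mul_const ⟪gradient f y, v⟫_ℝ
    have h3 : HasDerivAt (fun t : ℝ => L * ‖v‖ ^ 2 * t ^ 2 / 2) (L * ‖v‖ ^ 2 * t) t := by
      have := ((hasDerivAt_pow 2 t).const_mul (L * ‖v‖ ^ 2)).div_const 2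
      refine this.congr_deriv ?_
      ring
    exact ((hφ t).sub h2).sub h3
  have hanti : AntitoneOn ψ (Set.Icc 0 1) := by
    apply antitoneOn_of_deriv_nonpos (convex_Icc 0 1)
    · have hdiff : Differentiable ℝ ψ := fun t => (hψd t).differentiableAt
      exact hdiff.continuous.continuousOn
    · intro t _
      exact (hψd t).differentiableAt.differentiableWithinAt
    · intro t ht
      rw [interior_Icc] at ht
      rw [(hψd t).deriv]
      have hcs : ⟪gradient f (y + t • v) - gradient f y, v⟫_ℝ ≤
          ‖gradient f (y + t • v) - gradient f y‖ * ‖v‖ :=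
        real_inner_le_norm _ _
      have hL := hsm (y + t • v) y
      have : ‖y + t • v - y‖ = t * ‖v‖ := by
        rw [add_sub_cancel_left, norm_smul, Real.norm_eq_abs, abs_of_pos ht.1]
      rw [this] at hL
      have := inner_sub_left (𝕜 := ℝ) (gradient f (y + t • v)) (gradient f y) v
      nlinarith [norm_nonneg v, mul_le_mul_of_nonneg_right hL (norm_nonneg v)]
  have h01 : ψ 1 ≤ ψ 0 := hanti (by simp) (by simp) zero_le_one
  have h0 : ψ 0 = f y := by simp [hψ]
  have h1' : ψ 1 = f x - ⟪gradient f y, v⟫_ℝ - L * ‖v‖ ^ 2 / 2 := by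
    have hyx : y + (1:ℝ) • v = x := by simp [hv]
    simp only [hψ, hyx]
    ring
  rw [h0, h1'] at h01
  linarith

lemma grad_sum_zero (n : ℕ) (hn : 0 < n) (f : Fin n → E → ℝ)
    (hd : ∀ i, Differentiable ℝ (f i)) (xstar : E)
    (hmin : ∀ x, (n : ℝ)⁻¹ * ∑ i, f i xstar ≤ (n : ℝ)⁻¹ * ∑ i, f i x) :
    ∑ i, gradient (f i) xstar = 0 := by
  have hF : HasFDerivAt (fun x => (n : ℝ)⁻¹ * ∑ i, f i x)
      ((n : ℝ)⁻¹ • ∑ i, (toDual ℝ E (gradient (f i) xstar) : E →L[ℝ] ℝ)) xstar := by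
    have h1 : ∀ i ∈ Finset.univ, HasFDerivAt (f i)
        (toDual ℝ E (gradient (f i) xstar) : E →L[ℝ] ℝ) xstar :=
      fun i _ => hasGradientAt_iff_hasFDerivAt.mp (hd i xstar).hasGradientAt
    have h2 := HasFDerivAt.sum h1
    have h3 := h2.const_mul ((n : ℝ)⁻¹)
    simpa using h3
  have hloc : IsLocalMin (fun x => (n : ℝ)⁻¹ * ∑ i, f i x) xstar :=
    Filter.Eventually.of_forall hmin
  have hzero := hloc.hasFDerivAt_eq_zero hF
  set w := ∑ i, gradient (f i) xstar with hw
  have happ := DFunLike.congr_fun hzero w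
  simp only [ContinuousLinearMap.smul_apply, ContinuousLinearMap.zero_apply,
    ContinuousLinearMap.sum_apply, toDual_apply_apply] at happ
  have hin : ∑ i, ⟪gradient (f i) xstar, w⟫_ℝ = ⟪w, w⟫_ℝ := by
    rw [hw, sum_inner]
  rw [hin] at happ
  have hn' : ((n : ℝ))⁻¹ ≠ 0 := by positivity
  have : ⟪w, w⟫_ℝ = 0 := by
    rcases smul_eq_zero.mp happ with h | h
    · exact absurd h hn'
    · exact h
  exact inner_self_eq_zero.mp this

lemma perm_sum_sq (n : ℕ) (hn : 2 ≤ n) (g : Fin n → E) (hg : ∑ a, g a = 0)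
    (i : ℕ) (hi1 : 1 ≤ i) (hi : i ≤ n) :
    ∑ π : Equiv.Perm (Fin n),
      ‖∑ j ∈ Finset.univ.filter (fun j : Fin n => (j : ℕ) < i), g (π j)‖ ^ 2
    = (n.factorial : ℝ) * ((i : ℝ) * ((n : ℝ) - i) / ((n : ℝ) * ((n : ℝ) - 1)))
        * ∑ a, ‖g a‖ ^ 2 := by
  have hn0 : (0:ℝ) < n := by positivity
  have hn1 : (1:ℝ) < (n:ℝ) := by exact_mod_cast hn
  set W : ℝ := ∑ a, ‖g a‖ ^ 2 with hW
  set A : Fin n → Fin n → ℝ :=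
    fun j k => ∑ π : Equiv.Perm (Fin n), ⟪g (π j), g (π k)⟫_ℝ with hA
  set e0 : Fin n := ⟨0, by omega⟩
  set e1 : Fin n := ⟨1, by omega⟩
  have he01 : e0 ≠ e1 := by simp [e0, e1, Fin.ext_iff]
  -- transfer lemma
  have htrans : ∀ (j k j' k' : Fin n) (τ : Equiv.Perm (Fin n)),
      τ j' = j → τ k' = k → A j k = A j' k' := by
    intro j k j' k' τ hj hk
    rw [hA]
    exact Fintype.sum_equiv (Equiv.mulRight τ) _ _
      (fun π => by simp [Equiv.Perm.mul_apply, hj, hk])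
  have hdiag : ∀ j : Fin n, A j j = A e0 e0 := fun j =>
    htrans j j e0 e0 (Equiv.swap e0 j) (Equiv.swap_apply_left _ _) (Equiv.swap_apply_left _ _)
  have hoff : ∀ j k : Fin n, j ≠ k → A j k = A e0 e1 := by
    intro j k hjk
    set s1 : Equiv.Perm (Fin n) := Equiv.swap e0 j with hs1
    set k2 : Fin n := s1 e1 with hk2
    have hjk2 : j ≠ k2 := by
      intro h
      have : s1 e0 = s1 e1 := by
        rw [← hk2, ← h, hs1, Equiv.swap_apply_left]
      exact he01 (s1.injective this)
    set τ : Equiv.Perm (Fin n) := Equiv.swap k2 k * s1 with hτ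
    have hτ0 : τ e0 = j := by
      rw [hτ, Equiv.Perm.mul_apply, hs1, Equiv.swap_apply_left,
        Equiv.swap_apply_of_ne_of_ne hjk2 hjk]
    have hτ1 : τ e1 = k := by
      rw [hτ, Equiv.Perm.mul_apply, ← hk2, Equiv.swap_apply_left]
    exact htrans j k e0 e1 τ hτ0 hτ1
  -- diagonal value
  have hsumdiag : ∑ j : Fin n, A j j = (n.factorial : ℝ) * W := by
    rw [hA]
    rw [Finset.sum_comm]
    have : ∀ π : Equiv.Perm (Fin n), ∑ j : Fin n, ⟪g (π j), g (π j)⟫_ℝ = W := by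
      intro π
      rw [hW]
      rw [← Equiv.sum_comp π (fun a => ‖g a‖ ^ 2)]
      exact Finset.sum_congr rfl (fun j _ => real_inner_self_eq_norm_sq _)
    rw [Finset.sum_congr rfl (fun π _ => this π), Finset.sum_const, Finset.card_univ,
      Fintype.card_perm, Fintype.card_fin, nsmul_eq_mul]
  have hA00 : (n : ℝ) * A e0 e0 = (n.factorial : ℝ) * W := by
    rw [← hsumdiag, Finset.sum_congr rfl (fun j _ => hdiag j), Finset.sum_const,
      Finset.card_univ, Fintype.card_fin, nsmul_eq_mul]
  -- total sum is zero
  have hzero : ∑ j : Fin n, ∑ k : Fin n, A j k = 0 := by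
    have step : ∀ π : Equiv.Perm (Fin n),
        ∑ j : Fin n, ∑ k : Fin n, ⟪g (π j), g (π k)⟫_ℝ = 0 := by
      intro π
      have h1 : ∑ j : Fin n, g (π j) = 0 := by
        rw [Equiv.sum_comp π g]; exact hg
      calc ∑ j : Fin n, ∑ k : Fin n, ⟪g (π j), g (π k)⟫_ℝ
          = ⟪∑ j : Fin n, g (π j), ∑ k : Fin n, g (π k)⟫_ℝ := by
            rw [sum_inner]
            exact Finset.sum_congr rfl (fun j _ => by rw [inner_sum])
        _ = 0 := by rw [h1, inner_zero_left]
    calc ∑ j : Fin n, ∑ k : Fin n, A j k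
        = ∑ j : Fin n, ∑ π : Equiv.Perm (Fin n), ∑ k : Fin n, ⟪g (π j), g (π k)⟫_ℝ := by
          refine Finset.sum_congr rfl fun j _ => ?_
          rw [hA, Finset.sum_comm]
      _ = ∑ π : Equiv.Perm (Fin n), ∑ j : Fin n, ∑ k : Fin n, ⟪g (π j), g (π k)⟫_ℝ :=
          Finset.sum_comm
      _ = 0 := Finset.sum_eq_zero fun π _ => step π
  have hA01 : (n : ℝ) * ((n : ℝ) - 1) * A e0 e1 = -((n.factorial : ℝ) * W) := by
    have hsplit : ∀ j : Fin n, ∑ k : Fin n, A j k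
        = A e0 e0 + ((n : ℝ) - 1) * A e0 e1 := by
      intro j
      rw [← Finset.sum_erase_add Finset.univ _ (Finset.mem_univ j), hdiag j]
      have : ∑ k ∈ Finset.univ.erase j, A j k
          = ∑ k ∈ Finset.univ.erase j, A e0 e1 := by
        exact Finset.sum_congr rfl (fun k hk =>
          hoff j k (Ne.symm (Finset.ne_of_mem_erase hk)))
      rw [this, Finset.sum_const, Finset.card_erase_of_mem (Finset.mem_univ j),
        Finset.card_univ, Fintype.card_fin, nsmul_eq_mul]
      have : ((n - 1 : ℕ) : ℝ) = (n : ℝ) - 1 := by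
        rw [Nat.cast_sub (by omega)]; simp
      rw [this]; ring
    rw [Finset.sum_congr rfl (fun j _ => hsplit j), Finset.sum_const,
      Finset.card_univ, Fintype.card_fin, nsmul_eq_mul] at hzero
    nlinarith [hzero, hA00]
  -- the main computation
  have hcard : (Finset.univ.filter (fun j : Fin n => (j : ℕ) < i)).card = i := by
    have : Finset.univ.filter (fun j : Fin n => (j : ℕ) < i)
        = Finset.univ.map (Fin.castLEEmb hi) := by
      ext j
      simp only [Finset.mem_filter, Finset.mem_univ, true_and, Finset.mem_map,
        Fin.castLEEmb, Function.Embedding.coeFn_mk]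
      constructor
      · intro h; exact ⟨⟨(j : ℕ), h⟩, by simp [Fin.castLE, Fin.ext_iff]⟩
      · rintro ⟨a, rfl⟩; exact a.isLt
    rw [this, Finset.card_map, Finset.card_univ, Fintype.card_fin]
  set J := Finset.univ.filter (fun j : Fin n => (j : ℕ) < i) with hJ
  have hmain : ∑ π : Equiv.Perm (Fin n), ‖∑ j ∈ J, g (π j)‖ ^ 2
      = (i : ℝ) * A e0 e0 + (i : ℝ) * ((i : ℝ) - 1) * A e0 e1 := by
    have hexp : ∀ π : Equiv.Perm (Fin n), ‖∑ j ∈ J, g (π j)‖ ^ 2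
        = ∑ j ∈ J, ∑ k ∈ J, ⟪g (π j), g (π k)⟫_ℝ := by
      intro π
      rw [← real_inner_self_eq_norm_sq, sum_inner]
      exact Finset.sum_congr rfl (fun j _ => by rw [inner_sum])
    rw [Finset.sum_congr rfl (fun π _ => hexp π), Finset.sum_comm]
    have hsplit2 : ∀ j ∈ J, ∑ π : Equiv.Perm (Fin n), ∑ k ∈ J, ⟪g (π j), g (π k)⟫_ℝ
        = A e0 e0 + ((i : ℝ) - 1) * A e0 e1 := by
      intro j hj
      rw [Finset.sum_comm]
      have hconv : ∑ k ∈ J, ∑ π : Equiv.Perm (Fin n), ⟪g (π j), g (π k)⟫_ℝ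
          = ∑ k ∈ J, A j k := rfl
      rw [hconv, ← Finset.sum_erase_add J (A j) hj, hdiag j]
      have : ∑ k ∈ J.erase j, A j k = ∑ k ∈ J.erase j, A e0 e1 :=
        Finset.sum_congr rfl (fun k hk =>
          hoff j k (Ne.symm (Finset.ne_of_mem_erase hk)))
      rw [this, Finset.sum_const, Finset.card_erase_of_mem hj, hcard, nsmul_eq_mul]
      have : ((i - 1 : ℕ) : ℝ) = (i : ℝ) - 1 := by
        rw [Nat.cast_sub hi1]; simp
      rw [this]; ring
    rw [Finset.sum_congr rfl hsplit2, Finset.sum_const, hcard, nsmul_eq_mul]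
    ring
  rw [hmain]
  have hne : (n : ℝ) * ((n : ℝ) - 1) ≠ 0 := by nlinarith
  have hr : (n.factorial : ℝ) * ((i : ℝ) * ((n : ℝ) - (i : ℝ)) / ((n : ℝ) * ((n : ℝ) - 1))) * W
      = ((n.factorial : ℝ) * ((i : ℝ) * ((n : ℝ) - (i : ℝ))) * W) / ((n : ℝ) * ((n : ℝ) - 1)) := by
    ring
  rw [hr, eq_div_iff hne]
  linear_combination ((i : ℝ) * ((n : ℝ) - 1)) * hA00 + ((i : ℝ) * ((i : ℝ) - 1)) * hA01

set_option maxHeartbeats 1600000 in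
/-- Proposition 1: the shuffling variance `σ²_Shuffle` is bounded between
`γμn/8 · σ²_*` and `γLn/4 · σ²_*`. -/
theorem shuffling_variance_bounds
    (d n : ℕ) (hn : 2 ≤ n) (μ L γ : ℝ) (hμ : 0 < μ) (hγ : 0 < γ)
    (f : Fin n → EuclideanSpace ℝ (Fin d) → ℝ)
    (hd : ∀ i, Differentiable ℝ (f i))
    (hsc : ∀ i x y, f i x + (inner ℝ (gradient (f i) x) (y - x) : ℝ)
        + μ / 2 * ‖y - x‖ ^ 2 ≤ f i y)
    (hsm : ∀ i x y, ‖gradient (f i) x - gradient (f i) y‖ ≤ L * ‖x - y‖)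
    (xstar : EuclideanSpace ℝ (Fin d))
    (hmin : ∀ x, (n : ℝ)⁻¹ * ∑ i, f i xstar ≤ (n : ℝ)⁻¹ * ∑ i, f i x)
    (σstar2 : ℝ) (hσ : σstar2 = (n : ℝ)⁻¹ * ∑ i, ‖gradient (f i) xstar‖ ^ 2)
    (xs : Equiv.Perm (Fin n) → Fin n → EuclideanSpace ℝ (Fin d))
    (hxs : ∀ π i, xs π i = xstar - γ •
        ∑ j ∈ Finset.univ.filter (fun j : Fin n => (j : ℕ) < (i : ℕ)),
          gradient (f (π j)) xstar)
    (S : ℝ)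
    (hS : S = (Finset.univ.filter (fun i : Fin n => 1 ≤ (i : ℕ))).sup'
        ⟨⟨1, by omega⟩, Finset.mem_filter.mpr ⟨Finset.mem_univ _, le_refl 1⟩⟩
        (fun i => γ⁻¹ * ((Fintype.card (Equiv.Perm (Fin n)) : ℝ)⁻¹ *
          ∑ π : Equiv.Perm (Fin n),
            (f (π i) (xs π i) - f (π i) xstar
              - (inner ℝ (gradient (f (π i)) xstar) (xs π i - xstar) : ℝ))))) :
    γ * μ * n / 8 * σstar2 ≤ S ∧ S ≤ γ * L * n / 4 * σstar2 := by
  have hn0 : (0:ℝ) < (n:ℝ) := by positivity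
  have hn2 : (2:ℝ) ≤ (n:ℝ) := by exact_mod_cast hn
  have hden : (0:ℝ) < (n:ℝ) * ((n:ℝ) - 1) := by nlinarith
  have hg0 : ∑ a, gradient (f a) xstar = 0 := grad_sum_zero n (by omega) f hd xstar hmin
  set W : ℝ := ∑ a, ‖gradient (f a) xstar‖ ^ 2 with hWdef
  have hW0 : 0 ≤ W := Finset.sum_nonneg (fun a _ => by positivity)
  have hNcard : ((Fintype.card (Equiv.Perm (Fin n)) : ℝ)) = (n.factorial : ℝ) := by
    rw [Fintype.card_perm, Fintype.card_fin]
  have hNpos : (0:ℝ) < (n.factorial : ℝ) := by exact_mod_cast n.factorial_pos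
  have hLW : 0 ≤ L * W := by
    rcases eq_or_lt_of_le hW0 with h | h
    · rw [← h]; simp
    · have hex : ∃ a : Fin n, gradient (f a) xstar ≠ 0 := by
        by_contra hc
        push_neg at hc
        have : W = 0 := by
          rw [hWdef]
          exact Finset.sum_eq_zero (fun a _ => by rw [hc a]; simp)
        linarith
      obtain ⟨a, ha⟩ := hex
      have hv : 0 < ‖gradient (f a) xstar‖ := norm_pos_iff.mpr ha
      have h1 := hsm a (xstar + gradient (f a) xstar) xstar
      rw [add_sub_cancel_left] at h1
      have h2 : 0 ≤ ‖gradient (f a) (xstar + gradient (f a) xstar) - gradient (f a) xstar‖ :=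
        norm_nonneg _
      have hL : 0 ≤ L := by nlinarith
      exact mul_nonneg hL hW0
  have hnormsq : ∀ (π : Equiv.Perm (Fin n)) (i : Fin n),
      ‖xs π i - xstar‖ ^ 2 = γ ^ 2 *
        ‖∑ j ∈ Finset.univ.filter (fun j : Fin n => (j : ℕ) < (i : ℕ)),
          gradient (f (π j)) xstar‖ ^ 2 := by
    intro π i
    rw [hxs, sub_sub_cancel_left, norm_neg, norm_smul, Real.norm_eq_abs,
      abs_of_pos hγ, mul_pow]
  have key : ∀ i : Fin n, 1 ≤ (i:ℕ) →
      ∑ π : Equiv.Perm (Fin n),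
        ‖∑ j ∈ Finset.univ.filter (fun j : Fin n => (j : ℕ) < (i : ℕ)),
          gradient (f (π j)) xstar‖ ^ 2
      = (n.factorial : ℝ) * (((i:ℕ) : ℝ) * ((n:ℝ) - ((i:ℕ):ℝ)) / ((n:ℝ) * ((n:ℝ) - 1))) * W :=
    fun i hi1 => perm_sum_sq n hn (fun a => gradient (f a) xstar) hg0 (i:ℕ) hi1 (le_of_lt i.isLt)
  have hbound : ∀ i : Fin n, 1 ≤ (i:ℕ) →
      μ * γ / 2 * ((((i:ℕ):ℝ) * ((n:ℝ) - ((i:ℕ):ℝ)) / ((n:ℝ) * ((n:ℝ) - 1))) * W)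
        ≤ γ⁻¹ * ((Fintype.card (Equiv.Perm (Fin n)) : ℝ)⁻¹ *
          ∑ π : Equiv.Perm (Fin n),
            (f (π i) (xs π i) - f (π i) xstar
              - (inner ℝ (gradient (f (π i)) xstar) (xs π i - xstar) : ℝ)))
      ∧ γ⁻¹ * ((Fintype.card (Equiv.Perm (Fin n)) : ℝ)⁻¹ *
          ∑ π : Equiv.Perm (Fin n),
            (f (π i) (xs π i) - f (π i) xstar
              - (inner ℝ (gradient (f (π i)) xstar) (xs π i - xstar) : ℝ)))
        ≤ L * γ / 2 * ((((i:ℕ):ℝ) * ((n:ℝ) - ((i:ℕ):ℝ)) / ((n:ℝ) * ((n:ℝ) - 1))) * W) := by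
    intro i hi1
    set Q : ℝ := ∑ π : Equiv.Perm (Fin n),
      ‖∑ j ∈ Finset.univ.filter (fun j : Fin n => (j : ℕ) < (i : ℕ)),
        gradient (f (π j)) xstar‖ ^ 2 with hQdef
    have hQ := key i hi1
    have hlb : ∀ π : Equiv.Perm (Fin n),
        μ * γ ^ 2 / 2 * ‖∑ j ∈ Finset.univ.filter (fun j : Fin n => (j : ℕ) < (i : ℕ)),
          gradient (f (π j)) xstar‖ ^ 2
        ≤ f (π i) (xs π i) - f (π i) xstar
          - (inner ℝ (gradient (f (π i)) xstar) (xs π i - xstar) : ℝ) := by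
      intro π
      have h := hsc (π i) xstar (xs π i)
      rw [hnormsq π i] at h
      linarith
    have hub : ∀ π : Equiv.Perm (Fin n),
        f (π i) (xs π i) - f (π i) xstar
          - (inner ℝ (gradient (f (π i)) xstar) (xs π i - xstar) : ℝ)
        ≤ L * γ ^ 2 / 2 * ‖∑ j ∈ Finset.univ.filter (fun j : Fin n => (j : ℕ) < (i : ℕ)),
          gradient (f (π j)) xstar‖ ^ 2 := by
      intro π
      have h := descent_lemma (f (π i)) (hd (π i)) L (hsm (π i)) (xs π i) xstar
      rw [hnormsq π i] at h
      linarith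
    have hsumlb : μ * γ ^ 2 / 2 * Q ≤ ∑ π : Equiv.Perm (Fin n),
        (f (π i) (xs π i) - f (π i) xstar
          - (inner ℝ (gradient (f (π i)) xstar) (xs π i - xstar) : ℝ)) := by
      rw [hQdef, Finset.mul_sum]
      exact Finset.sum_le_sum (fun π _ => hlb π)
    have hsumub : (∑ π : Equiv.Perm (Fin n),
        (f (π i) (xs π i) - f (π i) xstar
          - (inner ℝ (gradient (f (π i)) xstar) (xs π i - xstar) : ℝ)))
        ≤ L * γ ^ 2 / 2 * Q := by
      rw [hQdef, Finset.mul_sum]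
      exact Finset.sum_le_sum (fun π _ => hub π)
    have hcoef : (0:ℝ) < γ⁻¹ * ((Fintype.card (Equiv.Perm (Fin n)) : ℝ))⁻¹ := by
      rw [hNcard]; positivity
    constructor
    · have h1 : γ⁻¹ * ((Fintype.card (Equiv.Perm (Fin n)) : ℝ)⁻¹ * (μ * γ ^ 2 / 2 * Q))
          ≤ γ⁻¹ * ((Fintype.card (Equiv.Perm (Fin n)) : ℝ)⁻¹ *
            ∑ π : Equiv.Perm (Fin n),
              (f (π i) (xs π i) - f (π i) xstar
                - (inner ℝ (gradient (f (π i)) xstar) (xs π i - xstar) : ℝ))) :=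
        mul_le_mul_of_nonneg_left
          (mul_le_mul_of_nonneg_left hsumlb (by rw [hNcard]; positivity))
          (by positivity)
      refine le_trans (le_of_eq ?_) h1
      rw [hQdef, hQ, hNcard]
      field_simp
    · have h1 : γ⁻¹ * ((Fintype.card (Equiv.Perm (Fin n)) : ℝ)⁻¹ *
            ∑ π : Equiv.Perm (Fin n),
              (f (π i) (xs π i) - f (π i) xstar
                - (inner ℝ (gradient (f (π i)) xstar) (xs π i - xstar) : ℝ)))
          ≤ γ⁻¹ * ((Fintype.card (Equiv.Perm (Fin n)) : ℝ)⁻¹ * (L * γ ^ 2 / 2 * Q)) :=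
        mul_le_mul_of_nonneg_left
          (mul_le_mul_of_nonneg_left hsumub (by rw [hNcard]; positivity))
          (by positivity)
      refine le_trans h1 (le_of_eq ?_)
      rw [hQdef, hQ, hNcard]
      field_simp
  subst hS
  constructor
  · -- lower bound
    have h12 : 1 ≤ n / 2 := by omega
    have hmem : (⟨n / 2, by omega⟩ : Fin n) ∈
        Finset.univ.filter (fun i : Fin n => 1 ≤ (i : ℕ)) :=
      Finset.mem_filter.mpr ⟨Finset.mem_univ _, h12⟩
    have hle := Finset.le_sup'
      (f := fun i : Fin n => γ⁻¹ * ((Fintype.card (Equiv.Perm (Fin n)) : ℝ)⁻¹ *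
          ∑ π : Equiv.Perm (Fin n),
            (f (π i) (xs π i) - f (π i) xstar
              - (inner ℝ (gradient (f (π i)) xstar) (xs π i - xstar) : ℝ)))) hmem
    refine le_trans ?_ (le_trans (hbound ⟨n / 2, by omega⟩ h12).1 hle)
    set a : ℝ := ((n / 2 : ℕ) : ℝ) with hadef
    have ha1 : 2 * a ≤ (n:ℝ) := by
      rw [hadef]; exact_mod_cast (by omega : 2 * (n / 2) ≤ n)
    have ha2 : (n:ℝ) ≤ 2 * a + 1 := by
      rw [hadef]; exact_mod_cast (by omega : n ≤ 2 * (n / 2) + 1)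
    have ha0 : 0 ≤ a := by rw [hadef]; positivity
    have hr4 : (1:ℝ) / 4 ≤ a * ((n:ℝ) - a) / ((n:ℝ) * ((n:ℝ) - 1)) := by
      rw [le_div_iff₀ hden]
      nlinarith [mul_nonneg (by linarith : (0:ℝ) ≤ (n:ℝ) - 2 * a)
        (by linarith : (0:ℝ) ≤ 2 * a + 1 - (n:ℝ))]
    calc γ * μ * n / 8 * σstar2 = (μ * γ / 2) * ((1/4) * W) := by
          rw [hσ]
          field_simp
          ring
      _ ≤ (μ * γ / 2) * ((a * ((n:ℝ) - a) / ((n:ℝ) * ((n:ℝ) - 1))) * W) := by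
          apply mul_le_mul_of_nonneg_left _ (by positivity)
          exact mul_le_mul_of_nonneg_right hr4 hW0
      _ = μ * γ / 2 * ((((( ⟨n / 2, by omega⟩ : Fin n) : ℕ):ℝ) *
            ((n:ℝ) - (((⟨n / 2, by omega⟩ : Fin n) : ℕ):ℝ)) / ((n:ℝ) * ((n:ℝ) - 1))) * W) := rfl
  · -- upper bound
    apply Finset.sup'_le
    intro i hi
    have hi1 : 1 ≤ (i:ℕ) := (Finset.mem_filter.mp hi).2
    refine le_trans (hbound i hi1).2 ?_
    set b : ℝ := ((i:ℕ):ℝ) with hbdef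
    have hb0 : 0 ≤ b := by rw [hbdef]; positivity
    have hrhalf : b * ((n:ℝ) - b) / ((n:ℝ) * ((n:ℝ) - 1)) ≤ 1 / 2 := by
      rw [div_le_iff₀ hden]
      nlinarith [sq_nonneg (2 * b - (n:ℝ))]
    calc L * γ / 2 * ((b * ((n:ℝ) - b) / ((n:ℝ) * ((n:ℝ) - 1))) * W)
        ≤ L * γ / 2 * ((1/2) * W) := by
          nlinarith [mul_nonneg (mul_nonneg (by linarith : (0:ℝ) ≤ γ / 2) hLW)
            (by linarith : (0:ℝ) ≤ 1 / 2 - b * ((n:ℝ) - b) / ((n:ℝ) * ((n:ℝ) - 1)))]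
      _ = γ * L * n / 4 * σstar2 := by
          rw [hσ]
          field_simp
          ring
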